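/- Let H(z;q) = Σ_{n=0}^∞ (-1;q)_n q^{n(n+1)/2}/((zq;q)_n (z^{-1}q;q)_n) and g₂(z;q) = Σ_{n=0}^∞ (-q;q)_n q^{n(n+1)/2}/((z;q)_{n+1}(z^{-1}q;q)_{n+1}). Then (1+z) H(z;q) = (1-z) + 2z(1-z) g₂(z;q), for |q|<1 and z with all denominators nonzero. -/

import Mathlib

open scoped BigOperators

/-- Finite q-Pochhammer symbol `(x;q)_n = ∏_{k=0}^{n-1} (1 - x qᵏ)`. -/
noncomputable def poch (x q : ℂ) (n : ℕ) : ℂ := ∏ k ∈ Finset.range n, (1 - x * q ^ k)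

/-- Infinite q-Pochhammer symbol `(x;q)_∞ = ∏_{k≥0} (1 - x qᵏ)`. -/
noncomputable def pochInf (x q : ℂ) : ℂ := ∏' k : ℕ, (1 - x * q ^ k)

set_option maxHeartbeats 1000000

lemma poch_zero (x q : ℂ) : poch x q 0 = 1 := by simp [poch]

lemma poch_succ (x q : ℂ) (n : ℕ) : poch x q (n+1) = poch x q n * (1 - x * q ^ n) := by
  simp [poch, Finset.prod_range_succ]

lemma poch_shift (x q : ℂ) (n : ℕ) : poch x q (n+1) = (1 - x) * poch (x*q) q n := by
  rw [poch, Finset.prod_range_succ', poch]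
  simp [mul_comm, pow_succ, mul_assoc, mul_left_comm]

lemma poch_neg_one (q : ℂ) (n : ℕ) : poch (-1) q (n+1) = 2 * poch (-q) q n := by
  rw [poch_shift]; norm_num

lemma poch_ne_zero {x q : ℂ} (h : ∀ k, x * q ^ k ≠ 1) (n : ℕ) : poch x q n ≠ 0 := by
  rw [poch]
  exact Finset.prod_ne_zero_iff.2 fun k _ => sub_ne_zero.2 fun hh => h k hh.symm

lemma norm_poch (x q : ℂ) (n : ℕ) : ‖poch x q n‖ = ∏ k ∈ Finset.range n, ‖1 - x * q ^ k‖ := by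
  rw [poch]; exact norm_prod _ _

lemma poch_upper {q : ℂ} (x : ℂ) (hq : ‖q‖ < 1) (n : ℕ) :
    ‖poch x q n‖ ≤ Real.exp (‖x‖ * (1 - ‖q‖)⁻¹) := by
  rw [norm_poch]
  have h1 : ∀ k ∈ Finset.range n, ‖1 - x * q ^ k‖ ≤ Real.exp (‖x‖ * ‖q‖ ^ k) := by
    intro k _
    calc ‖1 - x * q ^ k‖ ≤ ‖(1:ℂ)‖ + ‖x * q ^ k‖ := norm_sub_le _ _
    _ = 1 + ‖x‖ * ‖q‖ ^ k := by simp
    _ ≤ Real.exp (‖x‖ * ‖q‖ ^ k) := by rw [add_comm]; exact Real.add_one_le_exp _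
  calc ∏ k ∈ Finset.range n, ‖1 - x * q ^ k‖
      ≤ ∏ k ∈ Finset.range n, Real.exp (‖x‖ * ‖q‖ ^ k) :=
        Finset.prod_le_prod (fun k _ => norm_nonneg _) h1
    _ = Real.exp (∑ k ∈ Finset.range n, ‖x‖ * ‖q‖ ^ k) := by rw [Real.exp_sum]
    _ ≤ Real.exp (‖x‖ * (1 - ‖q‖)⁻¹) := by
        apply Real.exp_le_exp.2
        have hs : Summable (fun k : ℕ => ‖x‖ * ‖q‖ ^ k) :=
          (summable_geometric_of_lt_one (norm_nonneg q) hq).mul_left _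
        calc ∑ k ∈ Finset.range n, ‖x‖ * ‖q‖ ^ k ≤ ∑' k : ℕ, ‖x‖ * ‖q‖ ^ k :=
              Summable.sum_le_tsum _ (fun k _ => by positivity) hs
          _ = ‖x‖ * (1 - ‖q‖)⁻¹ := by
              rw [tsum_mul_left, tsum_geometric_of_lt_one (norm_nonneg q) hq]

lemma exp_le_one_sub {t : ℝ} (h0 : 0 ≤ t) (h1 : t ≤ 1/2) : Real.exp (-(2*t)) ≤ 1 - t := by
  have h2 : (1:ℝ) + 2*t ≤ Real.exp (2*t) := by
    have := Real.add_one_le_exp (2*t); linarith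
  have h3 : Real.exp (-(2*t)) * Real.exp (2*t) = 1 := by
    rw [← Real.exp_add]; norm_num
  nlinarith [Real.exp_pos (2*t), Real.exp_pos (-(2*t))]

lemma poch_lower {x q : ℂ} (hq : ‖q‖ < 1) (h : ∀ k, x * q ^ k ≠ 1) :
    ∃ c : ℝ, 0 < c ∧ ∀ n, c ≤ ‖poch x q n‖ := by
  have hq0 : (0:ℝ) ≤ ‖q‖ := norm_nonneg q
  have hts : Summable (fun k : ℕ => ‖x‖ * ‖q‖ ^ k) :=
    (summable_geometric_of_lt_one hq0 hq).mul_left _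
  have htn : ∀ k : ℕ, 0 ≤ ‖x‖ * ‖q‖ ^ k := fun k => by positivity
  obtain ⟨N, hN⟩ : ∃ N : ℕ, ∀ k, N ≤ k → ‖x‖ * ‖q‖ ^ k ≤ 1/2 := by
    have ht0 : Filter.Tendsto (fun k : ℕ => ‖x‖ * ‖q‖ ^ k) Filter.atTop (nhds 0) :=
      hts.tendsto_atTop_zero
    obtain ⟨N, hN⟩ := Metric.tendsto_atTop.1 ht0 (1/2) (by norm_num)
    refine ⟨N, fun k hk => ?_⟩
    have := hN k hk
    rw [Real.dist_eq, sub_zero, abs_of_nonneg (htn k)] at this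
    linarith
  set S : ℝ := ∑' k, ‖x‖ * ‖q‖ ^ k with hS
  have hSn : 0 ≤ S := tsum_nonneg htn
  have hfac : ∀ k : ℕ, (0:ℝ) < ‖1 - x * q ^ k‖ := fun k => by
    rw [norm_pos_iff]; exact sub_ne_zero.2 fun hh => h k hh.symm
  set m : ℝ := ∏ k ∈ Finset.range N, min 1 ‖1 - x * q ^ k‖ with hm
  have hmin_pos : ∀ k : ℕ, (0:ℝ) < min 1 ‖1 - x * q ^ k‖ := fun k => lt_min one_pos (hfac k)
  have hmpos : 0 < m := Finset.prod_pos fun k _ => hmin_pos k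
  refine ⟨m * Real.exp (-(2*S)), by positivity, fun n => ?_⟩
  have hexp1 : Real.exp (-(2*S)) ≤ 1 := by
    rw [Real.exp_le_one_iff]; linarith
  rcases le_or_gt n N with hn | hn
  · have h1 : m ≤ ∏ k ∈ Finset.range n, min 1 ‖1 - x * q ^ k‖ := by
      rw [hm, ← Finset.prod_range_mul_prod_Ico _ hn]
      have h2 : ∏ k ∈ Finset.Ico n N, min 1 ‖1 - x * q ^ k‖ ≤ 1 :=
        Finset.prod_le_one (fun k _ => le_of_lt (hmin_pos k)) (fun k _ => min_le_left _ _)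
      have h3 : (0:ℝ) ≤ ∏ k ∈ Finset.range n, min 1 ‖1 - x * q ^ k‖ :=
        Finset.prod_nonneg fun k _ => le_of_lt (hmin_pos k)
      nlinarith [Finset.prod_nonneg (fun k (_ : k ∈ Finset.Ico n N) => le_of_lt (hmin_pos k))]
    calc m * Real.exp (-(2*S)) ≤ m * 1 :=
          mul_le_mul_of_nonneg_left hexp1 (le_of_lt hmpos)
      _ = m := mul_one m
      _ ≤ ∏ k ∈ Finset.range n, min 1 ‖1 - x * q ^ k‖ := h1
      _ ≤ ∏ k ∈ Finset.range n, ‖1 - x * q ^ k‖ :=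
          Finset.prod_le_prod (fun k _ => le_of_lt (hmin_pos k)) (fun k _ => min_le_right _ _)
      _ = ‖poch x q n‖ := (norm_poch x q n).symm
  · rw [norm_poch, ← Finset.prod_range_mul_prod_Ico _ (le_of_lt hn)]
    have hA : m ≤ ∏ k ∈ Finset.range N, ‖1 - x * q ^ k‖ :=
      Finset.prod_le_prod (fun k _ => le_of_lt (hmin_pos k)) (fun k _ => min_le_right _ _)
    have hB : Real.exp (-(2*S)) ≤ ∏ k ∈ Finset.Ico N n, ‖1 - x * q ^ k‖ := by
      have step : ∀ k ∈ Finset.Ico N n, Real.exp (-(2*(‖x‖ * ‖q‖^k))) ≤ ‖1 - x * q ^ k‖ := by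
        intro k hk
        have hkN : N ≤ k := (Finset.mem_Ico.1 hk).1
        have h12 : ‖x‖ * ‖q‖ ^ k ≤ 1/2 := hN k hkN
        calc Real.exp (-(2*(‖x‖ * ‖q‖^k))) ≤ 1 - ‖x‖ * ‖q‖^k := exp_le_one_sub (htn k) h12
          _ = 1 - ‖x * q ^ k‖ := by rw [norm_mul, norm_pow]
          _ ≤ ‖1 - x * q ^ k‖ := by
              have := norm_sub_norm_le (1:ℂ) (x * q ^ k)
              simpa using this
      calc Real.exp (-(2*S)) ≤ Real.exp (-(2* ∑ k ∈ Finset.Ico N n, (‖x‖ * ‖q‖^k))) := by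
            apply Real.exp_le_exp.2
            have : ∑ k ∈ Finset.Ico N n, (‖x‖ * ‖q‖^k) ≤ S := by
              rw [hS]
              exact Summable.sum_le_tsum _ (fun k _ => htn k) hts
            linarith
        _ = ∏ k ∈ Finset.Ico N n, Real.exp (-(2*(‖x‖ * ‖q‖^k))) := by
            rw [← Real.exp_sum]; congr 1
            rw [Finset.mul_sum, ← Finset.sum_neg_distrib]
        _ ≤ ∏ k ∈ Finset.Ico N n, ‖1 - x * q ^ k‖ :=
            Finset.prod_le_prod (fun k _ => le_of_lt (Real.exp_pos _)) step
    exact mul_le_mul hA hB (le_of_lt (Real.exp_pos _)) (Finset.prod_nonneg fun k _ => norm_nonneg _)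

lemma tri_succ (n : ℕ) : (n+1)*(n+2)/2 = n*(n+1)/2 + (n+1) := by
  obtain ⟨m, hm⟩ : 2 ∣ n*(n+1) := even_iff_two_dvd.mp (Nat.even_mul_succ_self n)
  have h2 : (n+1)*(n+2) = 2*(m + (n+1)) := by nlinarith [hm]
  rw [h2, hm, Nat.mul_div_cancel_left _ (by norm_num : 0 < 2),
    Nat.mul_div_cancel_left _ (by norm_num : 0 < 2)]

lemma tri_ge (n : ℕ) : n ≤ n*(n+1)/2 := by
  rw [Nat.le_div_iff_mul_le (by norm_num : 0 < 2)]
  rcases n with _ | m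
  · simp
  · exact Nat.mul_le_mul_left _ (by omega)

/-- The telescoping sequence. -/
noncomputable def Tt (q z : ℂ) (n : ℕ) : ℂ :=
  2 * z * (poch (-q) q n * q ^ (n*(n+1)/2) / (poch (z*q) q n * poch (z⁻¹*q) q n))

lemma abstract_key (z P R D s Q q : ℂ) (hz : z ≠ 0) (hz1 : (1:ℂ) - z ≠ 0)
    (hP : P ≠ 0) (hR : R ≠ 0) (hα : (1:ℂ) - z*q*Q ≠ 0) (hB : z - q*Q ≠ 0) :
    (1+z) * (2 * D * (s * (q*Q)) * z / ((P * (1 - z*q*Q)) * (R * (z - q*Q))))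
      = 2*z*(1-z) * (D * s * z / (((1-z) * P) * (R * (z - q*Q))))
        + (2 * z * (D * (1 - (-q)*Q) * (s * (q*Q)) * z / ((P * (1 - z*q*Q)) * (R * (z - q*Q))))
           - 2 * z * (D * s / (P * R))) := by
  have h1 : (P * (1 - z*q*Q)) * (R * (z - q*Q)) ≠ 0 :=
    mul_ne_zero (mul_ne_zero hP hα) (mul_ne_zero hR hB)
  have h2 : ((1-z) * P) * (R * (z - q*Q)) ≠ 0 :=
    mul_ne_zero (mul_ne_zero hz1 hP) (mul_ne_zero hR hB)
  have h3 : P * R ≠ 0 := mul_ne_zero hP hR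
  simp only [← mul_div_assoc]
  rw [div_sub_div _ _ h1 h3, div_add_div _ _ h2 (mul_ne_zero h1 h3),
    div_eq_div_iff h1 (mul_ne_zero h2 (mul_ne_zero h1 h3))]
  ring

lemma key (q z : ℂ) (hz : z ≠ 0) (hz1 : (1:ℂ) - z ≠ 0) (n : ℕ)
    (hP : poch (z*q) q n ≠ 0) (hR : poch (z⁻¹*q) q n ≠ 0)
    (hα : (1:ℂ) - z*q*q^n ≠ 0) (hB : z - q*q^n ≠ 0) :
    (1+z) * (poch (-1) q (n+1) * q ^ ((n+1)*(n+2)/2) /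
        (poch (z*q) q (n+1) * poch (z⁻¹*q) q (n+1)))
      = 2*z*(1-z) * (poch (-q) q n * q ^ (n*(n+1)/2) /
          (poch z q (n+1) * poch (z⁻¹*q) q (n+1)))
        + (Tt q z (n+1) - Tt q z n) := by
  have hzinv : (1:ℂ) - z⁻¹*q*q^n = (z - q*q^n) * z⁻¹ := by
    field_simp
  have hpow : q ^ ((n+1)*(n+2)/2) = q ^ (n*(n+1)/2) * (q * q^n) := by
    rw [tri_succ, pow_add, pow_succ]; ring
  have hRsucc : poch (z⁻¹*q) q (n+1) = (poch (z⁻¹*q) q n * (z - q*q^n)) * z⁻¹ := by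
    rw [poch_succ, hzinv]; ring
  have hfix : ∀ a x : ℂ, x / (a * ((poch (z⁻¹*q) q n * (z - q*q^n)) * z⁻¹))
      = x * z / (a * (poch (z⁻¹*q) q n * (z - q*q^n))) := by
    intro a x
    have h : a * ((poch (z⁻¹*q) q n * (z - q*q^n)) * z⁻¹)
        = (a * (poch (z⁻¹*q) q n * (z - q*q^n))) / z := by
      rw [div_eq_mul_inv]; ring
    rw [h, div_div_eq_mul_div]
  rw [poch_neg_one, hpow, poch_succ (z*q), hRsucc, poch_shift z, hfix, hfix]
  simp only [Tt]
  rw [poch_succ (-q), poch_succ (z*q), hRsucc, hpow, hfix]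
  linear_combination abstract_key z (poch (z*q) q n) (poch (z⁻¹*q) q n) (poch (-q) q n)
    (q^(n*(n+1)/2)) (q^n) q hz hz1 hP hR hα hB

/-- McIntosh's relation between the overpartition rank function `H(z;q)` and
the universal mock theta function `g₂(z;q)`: `(1+z)H(z;q) = (1-z) + 2z(1-z)g₂(z;q)`. -/
theorem overpartition_rank_g2_relation (q z : ℂ) (hq : ‖q‖ < 1) (hz : z ≠ 0)
    (hzq : ∀ k : ℕ, z * q ^ k ≠ 1) (hzq' : ∀ k : ℕ, 1 ≤ k → z⁻¹ * q ^ k ≠ 1) :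
    (1 + z) * ∑' n : ℕ, poch (-1) q n * q ^ (n * (n + 1) / 2) /
        (poch (z * q) q n * poch (z⁻¹ * q) q n) =
      (1 - z) + 2 * z * (1 - z) *
        ∑' n : ℕ, poch (-q) q n * q ^ (n * (n + 1) / 2) /
          (poch z q (n + 1) * poch (z⁻¹ * q) q (n + 1)) := by
  have hq' : ‖q‖ < 1 := hq
  have hq0 : (0:ℝ) ≤ ‖q‖ := norm_nonneg q
  have hz1 : (1:ℂ) - z ≠ 0 := sub_ne_zero.2 fun h => hzq 0 (by rw [pow_zero, mul_one, ← h])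
  have hzq1 : ∀ k : ℕ, (z*q) * q ^ k ≠ 1 := fun k => by
    have := hzq (k+1)
    rw [pow_succ] at this
    intro h; exact this (by rw [← h]; ring)
  have hzq2 : ∀ k : ℕ, (z⁻¹*q) * q ^ k ≠ 1 := fun k => by
    have := hzq' (k+1) (Nat.le_add_left 1 k)
    rw [pow_succ] at this
    intro h; exact this (by rw [← h]; ring)
  have hP : ∀ n, poch (z*q) q n ≠ 0 := poch_ne_zero hzq1
  have hR : ∀ n, poch (z⁻¹*q) q n ≠ 0 := poch_ne_zero hzq2
  have hα : ∀ n : ℕ, (1:ℂ) - z*q*q^n ≠ 0 := fun n =>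
    sub_ne_zero.2 fun h => hzq1 n h.symm
  have hB : ∀ n : ℕ, z - q*q^n ≠ 0 := fun n => by
    intro h
    apply hzq' (n+1) (Nat.le_add_left 1 n)
    have hqz : q ^ (n+1) = z := by rw [pow_succ]; linear_combination -h
    rw [hqz, inv_mul_cancel₀ hz]
  obtain ⟨cP, hcP0, hcP⟩ := poch_lower hq' hzq1
  obtain ⟨cR, hcR0, hcR⟩ := poch_lower hq' hzq2
  set C1 : ℝ := Real.exp (‖(-1:ℂ)‖ * (1 - ‖q‖)⁻¹) with hC1
  set C2 : ℝ := Real.exp (‖(-q:ℂ)‖ * (1 - ‖q‖)⁻¹) with hC2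
  have hC10 : 0 < C1 := Real.exp_pos _
  have hC20 : 0 < C2 := Real.exp_pos _
  have hqpow : ∀ n : ℕ, ‖q‖ ^ (n*(n+1)/2) ≤ ‖q‖ ^ n := fun n =>
    pow_le_pow_of_le_one hq0 (le_of_lt hq') (tri_ge n)
  set A : ℕ → ℂ := fun n => poch (-1) q n * q ^ (n * (n + 1) / 2) /
      (poch (z * q) q n * poch (z⁻¹ * q) q n) with hA
  set B : ℕ → ℂ := fun n => poch (-q) q n * q ^ (n * (n + 1) / 2) /
      (poch z q (n + 1) * poch (z⁻¹ * q) q (n + 1)) with hB'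
  have hgeo : Summable (fun n : ℕ => ‖q‖ ^ n) := summable_geometric_of_lt_one hq0 hq'
  -- summability of A
  have hAnorm : ∀ n, ‖A n‖ ≤ (C1 / (cP * cR)) * ‖q‖ ^ n := by
    intro n
    rw [hA]
    simp only []
    rw [norm_div, norm_mul, norm_mul, norm_pow, div_mul_eq_mul_div]
    apply div_le_div₀ (by positivity)
    · exact mul_le_mul (poch_upper _ hq' n) (hqpow n) (by positivity) (le_of_lt hC10)
    · exact mul_pos hcP0 hcR0
    · exact mul_le_mul (hcP n) (hcR n) (le_of_lt hcR0) (norm_nonneg _)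
  have hAs : Summable A :=
    Summable.of_norm_bounded (hgeo.mul_left _) hAnorm
  -- summability of B
  have hBnorm : ∀ n, ‖B n‖ ≤ (C2 / ((‖(1:ℂ)-z‖ * cP) * cR)) * ‖q‖ ^ n := by
    intro n
    rw [hB']
    simp only []
    rw [poch_shift z, norm_div, norm_mul, norm_mul, norm_mul, norm_pow, div_mul_eq_mul_div]
    apply div_le_div₀ (by positivity)
    · exact mul_le_mul (poch_upper _ hq' n) (hqpow n) (by positivity) (le_of_lt hC20)
    · exact mul_pos (mul_pos (norm_pos_iff.2 hz1) hcP0) hcR0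
    · exact mul_le_mul (mul_le_mul le_rfl (hcP n) (le_of_lt hcP0) (norm_nonneg _))
        (hcR (n+1)) (le_of_lt hcR0) (by positivity)
  have hBs : Summable B :=
    Summable.of_norm_bounded (hgeo.mul_left _) hBnorm
  -- Tt tends to 0
  have hT0 : Filter.Tendsto (Tt q z) Filter.atTop (nhds 0) := by
    apply squeeze_zero_norm (a := fun n => ((2*‖z‖) * C2 / (cP * cR)) * ‖q‖ ^ n)
    · intro n
      have e : ‖Tt q z n‖ = 2*‖z‖*(‖poch (-q) q n‖*‖q‖^(n*(n+1)/2)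
          /(‖poch (z*q) q n‖*‖poch (z⁻¹*q) q n‖)) := by
        rw [Tt, norm_mul, norm_mul, norm_div, norm_mul, norm_mul, norm_pow]
        norm_num
      rw [e]
      have hb : ‖poch (-q) q n‖*‖q‖^(n*(n+1)/2)/(‖poch (z*q) q n‖*‖poch (z⁻¹*q) q n‖)
          ≤ C2*‖q‖^n/(cP*cR) :=
        div_le_div₀ (by positivity)
          (mul_le_mul (poch_upper _ hq' n) (hqpow n) (by positivity) (le_of_lt hC20))
          (mul_pos hcP0 hcR0)
          (mul_le_mul (hcP n) (hcR n) (le_of_lt hcR0) (norm_nonneg _))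
      calc 2*‖z‖*(‖poch (-q) q n‖*‖q‖^(n*(n+1)/2)/(‖poch (z*q) q n‖*‖poch (z⁻¹*q) q n‖))
          ≤ 2*‖z‖*(C2*‖q‖^n/(cP*cR)) :=
            mul_le_mul_of_nonneg_left hb (by positivity)
        _ = (2*‖z‖) * C2 / (cP * cR) * ‖q‖ ^ n := by ring
    · have := (tendsto_pow_atTop_nhds_zero_of_lt_one hq0 hq').const_mul
        ((2*‖z‖) * C2 / (cP * cR))
      simpa using this
  -- telescoping identity for partial sums
  have hkey : ∀ n : ℕ, (1+z) * A (n+1)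
      = 2*z*(1-z) * B n + (Tt q z (n+1) - Tt q z n) := by
    intro n
    exact key q z hz hz1 n (hP n) (hR n) (hα n) (hB n)
  have htel : ∀ N : ℕ, ∑ n ∈ Finset.range N, ((1+z) * A (n+1))
      = 2*z*(1-z) * ∑ n ∈ Finset.range N, B n + (Tt q z N - Tt q z 0) := by
    intro N
    rw [← Finset.sum_range_sub (Tt q z), Finset.mul_sum, ← Finset.sum_add_distrib]
    exact Finset.sum_congr rfl fun n _ => hkey n
  -- limits
  have hA0 : A 0 = 1 := by rw [hA]; simp [poch_zero]
  have hTt0 : Tt q z 0 = 2 * z := by rw [Tt]; simp [poch_zero]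
  have hshift : ∀ N : ℕ, ∑ n ∈ Finset.range N, ((1+z) * A (n+1))
      = (1+z) * (∑ n ∈ Finset.range (N+1), A n - A 0) := by
    intro N
    rw [Finset.sum_range_succ' A, ← Finset.mul_sum]
    ring
  have hlim1 : Filter.Tendsto (fun N => ∑ n ∈ Finset.range N, ((1+z) * A (n+1)))
      Filter.atTop (nhds ((1+z) * (∑' n, A n - A 0))) := by
    simp only [hshift]
    apply Filter.Tendsto.const_mul
    apply Filter.Tendsto.sub_const
    exact hAs.hasSum.tendsto_sum_nat.comp (Filter.tendsto_add_atTop_nat 1)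
  have hlim2 : Filter.Tendsto (fun N => 2*z*(1-z) * ∑ n ∈ Finset.range N, B n
      + (Tt q z N - Tt q z 0)) Filter.atTop
      (nhds (2*z*(1-z) * ∑' n, B n + (0 - Tt q z 0))) := by
    exact (hBs.hasSum.tendsto_sum_nat.const_mul _).add
      ((hT0.sub_const _))
  have heq : (1+z) * (∑' n, A n - A 0) = 2*z*(1-z) * ∑' n, B n + (0 - Tt q z 0) := by
    apply tendsto_nhds_unique _ hlim2
    have : (fun N => ∑ n ∈ Finset.range N, ((1+z) * A (n+1)))
        = fun N => 2*z*(1-z) * ∑ n ∈ Finset.range N, B n + (Tt q z N - Tt q z 0) :=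
      funext htel
    rw [← this]
    exact hlim1
  rw [hA0, hTt0] at heq
  linear_combination heq
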